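/- Let G be a simple undirected graph and C a v-component such that G[C] is not a cycle. Then the auxiliary graph H_C is 2-vertex-connected. -/

import Mathlib

open Set

/-- `Y` is a minimal removable set (MRS) of component `C` in set system `𝒞`. -/
def IsMRS {α : Type*} (𝒞 : Set (Set α)) (C Y : Set α) : Prop :=
  Y.Nonempty ∧ Y ⊆ C ∧ C \ Y ∈ 𝒞 ∧ ∀ Z : Set α, Z.Nonempty → Z ⊂ Y → C \ Z ∉ 𝒞

/-- The set system `𝒞` has the subset-disjoint (SD) property. -/
def SDProperty {α : Type*} (𝒞 : Set (Set α)) : Prop :=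
  ∀ C ∈ 𝒞, ∀ C' ∈ 𝒞, C' ⊂ C → ∀ Y : Set α, IsMRS 𝒞 C Y → Y ⊆ C' ∨ Y ∩ C' = ∅

/-- A graph is 2-edge-connected: connected and has no bridge. -/
def TwoEC {V : Type*} (H : SimpleGraph V) : Prop :=
  H.Connected ∧ ∀ e : Sym2 V, ¬ H.IsBridge e

/-- A graph is 2-vertex-connected: more than 2 vertices and removing any vertex keeps it connected. -/
def TwoVC {V : Type*} (H : SimpleGraph V) : Prop :=
  2 < Nat.card V ∧ ∀ v : V, (H.induce ({v}ᶜ : Set V)).Connected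

/-- Family of vertex subsets of size `> 1` inducing 2-edge-connected subgraphs. -/
def Ce {V : Type*} (G : SimpleGraph V) : Set (Set V) :=
  {C | TwoEC (G.induce C) ∧ 1 < C.ncard}

/-- Family of vertex subsets inducing 2-vertex-connected subgraphs. -/
def Cv {V : Type*} (G : SimpleGraph V) : Set (Set V) :=
  {C | TwoVC (G.induce C)}

/-- Degree of `v` in the induced subgraph `G[C]`. -/
noncomputable def degIn {V : Type*} (G : SimpleGraph V) (C : Set V) (v : V) : ℕ :=
  (G.neighborSet v ∩ C).ncard

/-- `P` is a two-deg path in `G[C]`: all vertices of degree 2, inducing a connected subgraph. -/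
def TwoDegPath {V : Type*} (G : SimpleGraph V) (C P : Set V) : Prop :=
  P ⊆ C ∧ (∀ u ∈ P, degIn G C u = 2) ∧ (G.induce P).Connected

/-- `P` is a maximal two-deg path in `G[C]`. -/
def MaxTwoDegPath {V : Type*} (G : SimpleGraph V) (C P : Set V) : Prop :=
  TwoDegPath G C P ∧ ∀ P' : Set V, TwoDegPath G C P' → P ⊆ P' → P' = P

/-- `Y` is a candidate of `C`: a maximal two-deg path or a singleton of a vertex of degree `> 2`. -/
def Can {V : Type*} (G : SimpleGraph V) (C Y : Set V) : Prop :=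
  MaxTwoDegPath G C Y ∨ ∃ v ∈ C, 2 < degIn G C v ∧ Y = {v}

/-- A graph is a cycle: connected and every vertex has exactly two neighbours. -/
def IsCycleGraph {W : Type*} (H : SimpleGraph W) : Prop :=
  H.Connected ∧ ∀ v : W, (H.neighborSet v).ncard = 2

/-- `S` is a maximal subset of `C` inducing a 2-vertex-connected subgraph. -/
def IsMaxVComp {V : Type*} (G : SimpleGraph V) (C S : Set V) : Prop :=
  S ⊆ C ∧ TwoVC (G.induce S) ∧ ∀ S' : Set V, S ⊆ S' → S' ⊆ C → TwoVC (G.induce S') → S' = S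

/-- Vertex type of the auxiliary graph `H_C`: ordinary vertices (degree `> 2` vertices of `G[C]`),
maximal two-deg paths, and edges of `G[C]` joining two vertices of degree `> 2`. -/
abbrev HVert {V : Type*} (G : SimpleGraph V) (C : Set V) : Type _ :=
  {v : V // v ∈ C ∧ 2 < degIn G C v} ⊕
  ({P : Set V // MaxTwoDegPath G C P} ⊕
   {e : Sym2 V // e ∈ G.edgeSet ∧ ∀ v ∈ e, v ∈ C ∧ 2 < degIn G C v})

/-- Base relation of the auxiliary graph. -/
def HRel {V : Type*} (G : SimpleGraph V) (C : Set V) : HVert G C → HVert G C → Prop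
  | Sum.inl u, Sum.inr (Sum.inl P) => ∃ w ∈ P.1, G.Adj u.1 w
  | Sum.inl u, Sum.inr (Sum.inr e) => u.1 ∈ e.1
  | _, _ => False

/-- The auxiliary graph `H_C`. -/
def HC {V : Type*} (G : SimpleGraph V) (C : Set V) : SimpleGraph (HVert G C) :=
  SimpleGraph.fromRel (HRel G C)

/-- `{a, b}` is a cut point pair of `H`: a vertex cut of size exactly 2. -/
def CutPair {W : Type*} (H : SimpleGraph W) (a b : W) : Prop :=
  a ≠ b ∧ ¬ (H.induce ({a, b}ᶜ : Set W)).Preconnected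

/-- The vertex `x` of the auxiliary graph represents the candidate set `Y ⊆ C`. -/
def RepsCan {V : Type*} (G : SimpleGraph V) (C : Set V) : HVert G C → Set V → Prop
  | Sum.inl u, Y => Y = {u.1}
  | Sum.inr (Sum.inl P), Y => Y = P.1
  | Sum.inr (Sum.inr _), _ => False

/-- `x` is an auxiliary vertex of `H_C` (i.e. lies in `Λ(C)`). -/
def IsAuxVert {V : Type*} (G : SimpleGraph V) (C : Set V) : HVert G C → Prop
  | Sum.inl _ => False
  | Sum.inr _ => True

/- ===== auxiliary development ===== -/

namespace StmtAux
set_option linter.unusedSectionVars false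

open Relation SimpleGraph

variable {V : Type*} [Fintype V] (G : SimpleGraph V) (C : Set V)

/-- one-sided restricted step relation -/
def Rel (A : Set V) : V → V → Prop := fun p q => q ∈ A ∧ G.Adj p q

lemma chain_mem {A : Set V} {a b : V} (ha : a ∈ A) (h : ReflTransGen (Rel G A) a b) :
    b ∈ A := by
  induction h with
  | refl => exact ha
  | tail _ hstep _ => exact hstep.1

lemma chain_rev {A : Set V} {a b : V} (ha : a ∈ A) (h : ReflTransGen (Rel G A) a b) :
    ReflTransGen (Rel G A) b a := by
  induction h with
  | refl => exact .refl
  | tail hc hstep ih => exact .head ⟨chain_mem G ha hc, hstep.2.symm⟩ ih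

lemma chain_to_induce {W : Type*} (H : SimpleGraph W) (K : Set W) {y z : W} (hy : y ∈ K)
    (h : ReflTransGen (fun p q => q ∈ K ∧ H.Adj p q) y z) :
    ∃ hz : z ∈ K, (H.induce K).Reachable ⟨y, hy⟩ ⟨z, hz⟩ := by
  induction h with
  | refl => exact ⟨hy, SimpleGraph.Reachable.refl _⟩
  | tail _ hstep ih =>
      obtain ⟨hm, hr⟩ := ih
      refine ⟨hstep.1, hr.trans (SimpleGraph.Adj.reachable ?_)⟩
      exact hstep.2

lemma induce_to_chain {W : Type*} (H : SimpleGraph W) (K : Set W) {a b : {x // x ∈ K}}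
    (h : (H.induce K).Reachable a b) :
    ReflTransGen (fun p q => q ∈ K ∧ H.Adj p q) a.1 b.1 := by
  obtain ⟨w⟩ := h
  induction w with
  | nil => exact .refl
  | @cons u v w huv _ ih => exact .head ⟨v.2, huv⟩ ih

lemma first_step {α : Type*} {r : α → α → Prop} {a b : α} (hne : a ≠ b)
    (h : ReflTransGen r a b) : ∃ c, r a c := by
  rcases h.cases_head with h | ⟨c, hc, _⟩
  · exact absurd h hne
  · exact ⟨c, hc⟩

end StmtAux
namespace StmtAux
set_option linter.unusedSectionVars false
open Relation SimpleGraph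
variable {V : Type*} [Fintype V] (G : SimpleGraph V) (C : Set V)

/-- chains within `C \ {u}` from 2-vertex-connectivity -/
lemma F2 (hC : TwoVC (G.induce C)) {u : V} (hu : u ∈ C) {a b : V}
    (ha : a ∈ C \ {u}) (hb : b ∈ C \ {u}) :
    ReflTransGen (Rel G (C \ {u})) a b := by
  have hcon := (hC.2 ⟨u, hu⟩).preconnected
  have haK : (⟨a, ha.1⟩ : {x // x ∈ C}) ∈ ({(⟨u, hu⟩ : {x // x ∈ C})}ᶜ : Set {x // x ∈ C}) := by
    simp only [Set.mem_compl_iff, Set.mem_singleton_iff]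
    intro h; exact ha.2 (congrArg Subtype.val h)
  have hbK : (⟨b, hb.1⟩ : {x // x ∈ C}) ∈ ({(⟨u, hu⟩ : {x // x ∈ C})}ᶜ : Set {x // x ∈ C}) := by
    simp only [Set.mem_compl_iff, Set.mem_singleton_iff]
    intro h; exact hb.2 (congrArg Subtype.val h)
  have h := induce_to_chain (G.induce C) _ (hcon ⟨⟨a, ha.1⟩, haK⟩ ⟨⟨b, hb.1⟩, hbK⟩)
  have := ReflTransGen.lift (f := fun (x : {x // x ∈ C}) => x.1)
    (r := fun p q : {x // x ∈ C} =>
      q ∈ ({(⟨u, hu⟩ : {x // x ∈ C})}ᶜ : Set {x // x ∈ C}) ∧ (G.induce C).Adj p q)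
    (p := Rel G (C \ {u})) ?_ _ _ h
  · exact this
  · rintro p q ⟨hq, hadj⟩
    refine ⟨⟨q.2, ?_⟩, hadj⟩
    intro h
    exact hq (by simp only [Set.mem_compl_iff, Set.mem_singleton_iff] at *; exact Subtype.ext h)

/-- three distinct elements of C -/
lemma three_distinct (hC : TwoVC (G.induce C)) :
    ∃ a b c : V, a ∈ C ∧ b ∈ C ∧ c ∈ C ∧ a ≠ b ∧ a ≠ c ∧ b ≠ c := by
  have h := hC.1
  have : Fintype {x // x ∈ C} := Fintype.ofFinite _
  rw [Nat.card_eq_fintype_card] at h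
  obtain ⟨a, b, c, hab, hac, hbc⟩ := Fintype.two_lt_card_iff.mp h
  exact ⟨a.1, b.1, c.1, a.2, b.2, c.2, fun h => hab (Subtype.ext h),
    fun h => hac (Subtype.ext h), fun h => hbc (Subtype.ext h)⟩

/-- chains within all of `C` -/
lemma F1 (hC : TwoVC (G.induce C)) {a b : V} (ha : a ∈ C) (hb : b ∈ C) :
    ReflTransGen (Rel G C) a b := by
  by_cases hab : a = b
  · exact hab ▸ ReflTransGen.refl
  obtain ⟨x, y, z, hx, hy, hz, hxy, hxz, hyz⟩ := three_distinct G C hC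
  have : ∃ u ∈ C, u ≠ a ∧ u ≠ b := by
    by_cases h1 : x ≠ a ∧ x ≠ b
    · exact ⟨x, hx, h1⟩
    by_cases h2 : y ≠ a ∧ y ≠ b
    · exact ⟨y, hy, h2⟩
    by_cases h3 : z ≠ a ∧ z ≠ b
    · exact ⟨z, hz, h3⟩
    push_neg at h1 h2 h3
    -- each of x,y,z is a or b; pigeonhole among 3 distinct
    rcases eq_or_ne x a with rfl | hxa
    · rcases eq_or_ne y b with rfl | hyb
      · rcases (h3 (fun h => hxz h.symm)) with rfl; exact absurd rfl hyz
      · rcases (h2 (fun h => hxy h.symm)) with rfl; exact absurd rfl hyb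
    · rcases h1 hxa with rfl
      rcases eq_or_ne y a with rfl | hya
      · rcases (h3 (fun h => hyz h.symm)) with rfl; exact absurd rfl hxz
      · rcases (h2 hya) with rfl; exact absurd rfl hxy
  obtain ⟨u, hu, hua, hub⟩ := this
  exact ReflTransGen.mono
    (fun p q hpq => ⟨hpq.1.1, hpq.2⟩) _ _ (F2 G C hC hu ⟨ha, fun h => hua h.symm⟩ ⟨hb, fun h => hub h.symm⟩)

/-- minimum degree 2 -/
lemma min_deg (hC : TwoVC (G.induce C)) {v : V} (hv : v ∈ C) : 2 ≤ degIn G C v := by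
  by_contra h
  push_neg at h
  have hfin : (G.neighborSet v ∩ C).Finite := Set.toFinite _
  interval_cases hd : degIn G C v
  · -- degree 0 : neighbor set empty
    have hemp : G.neighborSet v ∩ C = ∅ := by
      rw [← Set.ncard_eq_zero hfin]; exact hd
    obtain ⟨x, y, z, hx, hy, hz, hxy, hxz, hyz⟩ := three_distinct G C hC
    have : ∃ u ∈ C, u ≠ v ∧ ∃ w ∈ C, w ≠ v ∧ w ≠ u := by
      by_cases hxv : x = v
      · exact ⟨y, hy, fun h => hxy (hxv ▸ h.symm ▸ rfl), z, hz,
          fun h => hxz (hxv ▸ h.symm ▸ rfl), fun h => hyz (h.symm)⟩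
      · by_cases hyv : y = v
        · exact ⟨x, hx, hxv, z, hz, fun h => hyz (hyv ▸ h.symm ▸ rfl), fun h => hxz h.symm⟩
        · exact ⟨x, hx, hxv, y, hy, hyv, fun h => hxy h.symm⟩
    obtain ⟨u, hu, huv, w, hw, hwv, hwu⟩ := this
    have hchain := F2 G C hC hu (a := v) (b := w) ⟨hv, fun h => huv (h.symm)⟩
      ⟨hw, fun h => hwu h⟩
    obtain ⟨c, hc⟩ := first_step (fun h => hwv h.symm) hchain
    exact absurd (show c ∈ G.neighborSet v ∩ C from ⟨hc.2, hc.1.1⟩) (by rw [hemp]; exact notMem_empty c)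
  · -- degree 1 : unique neighbor m
    obtain ⟨m, hm⟩ := Set.ncard_eq_one.mp hd
    have hmC : m ∈ C := by
      have : m ∈ G.neighborSet v ∩ C := hm ▸ rfl
      exact this.2
    obtain ⟨x, y, z, hx, hy, hz, hxy, hxz, hyz⟩ := three_distinct G C hC
    have : ∃ w ∈ C, w ≠ v ∧ w ≠ m := by
      by_cases h1 : x ≠ v ∧ x ≠ m
      · exact ⟨x, hx, h1⟩
      by_cases h2 : y ≠ v ∧ y ≠ m
      · exact ⟨y, hy, h2⟩
      by_cases h3 : z ≠ v ∧ z ≠ m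
      · exact ⟨z, hz, h3⟩
      push_neg at h1 h2 h3
      rcases eq_or_ne x v with rfl | hxv
      · rcases eq_or_ne y m with rfl | hym
        · rcases (h3 (fun h => hxz h.symm)) with rfl; exact absurd rfl hyz
        · rcases (h2 (fun h => hxy h.symm)) with rfl; exact absurd rfl hym
      · rcases h1 hxv with rfl
        rcases eq_or_ne y v with rfl | hyv
        · rcases (h3 (fun h => hyz h.symm)) with rfl; exact absurd rfl hxz
        · rcases (h2 hyv) with rfl; exact absurd rfl hxy
    obtain ⟨w, hw, hwv, hwm⟩ := this
    have hvm : v ≠ m := fun h => (G.irrefl (h ▸ (show m ∈ G.neighborSet v ∩ C from hm ▸ rfl).1))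
    have hchain := F2 G C hC hmC (a := v) (b := w) ⟨hv, hvm⟩ ⟨hw, hwm⟩
    obtain ⟨c, hc⟩ := first_step (fun h => hwv h.symm) hchain
    have : c ∈ G.neighborSet v ∩ C := ⟨hc.2, hc.1.1⟩
    rw [hm] at this
    exact hc.1.2 this

end StmtAux
namespace StmtAux
set_option linter.unusedSectionVars false
open Relation SimpleGraph
variable {V : Type*} [Fintype V] (G : SimpleGraph V) (C : Set V)

/-- degree-2 vertices of C -/
def Dset : Set V := {u | u ∈ C ∧ degIn G C u = 2}

/-- the maximal two-deg path containing `v` -/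
def Pset (v : V) : Set V := {u | u ∈ Dset G C ∧ ReflTransGen (Rel G (Dset G C)) v u}

lemma mem_pset_self {v : V} (hv : v ∈ Dset G C) : v ∈ Pset G C v := ⟨hv, .refl⟩

lemma pset_subset_dset {v : V} : Pset G C v ⊆ Dset G C := fun _ h => h.1

lemma pset_eq_of_mem {v u : V} (hv : v ∈ Dset G C) (hu : u ∈ Pset G C v) :
    Pset G C u = Pset G C v := by
  ext w
  constructor
  · rintro ⟨hw, hc⟩; exact ⟨hw, hu.2.trans hc⟩
  · rintro ⟨hw, hc⟩
    exact ⟨hw, (chain_rev G hv hu.2).trans hc⟩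

lemma pset_two_deg_path {v : V} (hv : v ∈ Dset G C) : TwoDegPath G C (Pset G C v) := by
  refine ⟨fun u hu => hu.1.1, fun u hu => hu.1.2, ?_⟩
  have hne : Nonempty {x // x ∈ Pset G C v} := ⟨⟨v, mem_pset_self G C hv⟩⟩
  refine ⟨?_⟩
  -- preconnected
  rintro ⟨a, ha⟩ ⟨b, hb⟩
  -- chain from a to v to b within Pset
  have key : ∀ u (hu : u ∈ Pset G C v),
      ReflTransGen (fun p q => q ∈ Pset G C v ∧ G.Adj p q) v u := by
    rintro u ⟨hud, hchain⟩
    clear ha hb a b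
    induction hchain with
    | refl => exact .refl
    | @tail m u hc hstep ih =>
        have hm : m ∈ Pset G C v := ⟨by
          rcases hc.cases_head with rfl | ⟨c, hc1, hc2⟩
          · exact hv
          · exact chain_mem G hc1.1 hc2, hc⟩
        exact (ih hm.1).tail ⟨⟨hstep.1, hc.tail hstep⟩, hstep.2⟩
  have hca := key a ha
  have hcb := key b hb
  have hrev := chain_rev G (A := Pset G C v) (mem_pset_self G C hv) hca
  obtain ⟨hv', hr⟩ := chain_to_induce G (Pset G C v) ha (hrev.trans hcb)
  exact hr
  -- (the above gives reachability ⟨a⟩ ⟨b⟩)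

lemma two_deg_path_subset_pset {P : Set V} (hP : TwoDegPath G C P) {v : V} (hv : v ∈ P) :
    P ⊆ Pset G C v := by
  intro u hu
  have hPD : P ⊆ Dset G C := fun x hx => ⟨hP.1 hx, hP.2.1 x hx⟩
  have hpre := hP.2.2.preconnected ⟨v, hv⟩ ⟨u, hu⟩
  have hchain := induce_to_chain G P hpre
  refine ⟨hPD hu, ReflTransGen.mono ?_ _ _ hchain⟩
  rintro p q ⟨hq, hadj⟩
  exact ⟨hPD hq, hadj⟩

lemma pset_max {v : V} (hv : v ∈ Dset G C) : MaxTwoDegPath G C (Pset G C v) := by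
  refine ⟨pset_two_deg_path G C hv, ?_⟩
  intro P' hP' hsub
  have hvP' : v ∈ P' := hsub (mem_pset_self G C hv)
  exact (two_deg_path_subset_pset G C hP' hvP').antisymm hsub

lemma max_eq_pset {P : Set V} (hP : MaxTwoDegPath G C P) {v : V} (hv : v ∈ P) :
    P = Pset G C v := by
  have hvD : v ∈ Dset G C := ⟨hP.1.1 hv, hP.1.2.1 v hv⟩
  exact (hP.2 (Pset G C v) (pset_two_deg_path G C hvD)
    (two_deg_path_subset_pset G C hP.1 hv)).symm

lemma pset_adj_eq {p q : V} (hp : p ∈ Dset G C) (hq : q ∈ Dset G C) (h : G.Adj p q) :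
    Pset G C p = Pset G C q := by
  have : q ∈ Pset G C p := ⟨hq, ReflTransGen.single ⟨hq, h⟩⟩
  exact (pset_eq_of_mem G C hp this).symm

/-- the canonical map from vertices of C to vertices of H_C -/
noncomputable def phi (hC : TwoVC (G.induce C)) (v : V) (hv : v ∈ C) : HVert G C :=
  if h : 2 < degIn G C v then Sum.inl ⟨v, hv, h⟩
  else Sum.inr (Sum.inl ⟨Pset G C v,
    pset_max G C ⟨hv, le_antisymm (not_lt.mp h) (min_deg G C hC hv)⟩⟩)

lemma phi_branch (hC : TwoVC (G.induce C)) {v : V} (hv : v ∈ C) (h : 2 < degIn G C v) :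
    phi G C hC v hv = Sum.inl ⟨v, hv, h⟩ := dif_pos h

lemma phi_two (hC : TwoVC (G.induce C)) {v : V} (hv : v ∈ C) (h : ¬ 2 < degIn G C v) :
    ∃ hm, phi G C hC v hv = Sum.inr (Sum.inl ⟨Pset G C v, hm⟩) := ⟨_, dif_neg h⟩

lemma mem_dset_of_not_branch (hC : TwoVC (G.induce C)) {v : V} (hv : v ∈ C)
    (h : ¬ 2 < degIn G C v) : v ∈ Dset G C :=
  ⟨hv, le_antisymm (not_lt.mp h) (min_deg G C hC hv)⟩

/-- the auxiliary edge vertex -/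
def eVert {p q : V} (hp : p ∈ C) (hq : q ∈ C) (hdp : 2 < degIn G C p)
    (hdq : 2 < degIn G C q) (h : G.Adj p q) : HVert G C :=
  Sum.inr (Sum.inr ⟨s(p, q), (G.mem_edgeSet).mpr h, by
    intro v hv
    rcases Sym2.mem_iff.mp hv with rfl | rfl
    · exact ⟨hp, hdp⟩
    · exact ⟨hq, hdq⟩⟩)

end StmtAux
namespace StmtAux
set_option linter.unusedSectionVars false
open Relation SimpleGraph
variable {V : Type*} [Fintype V] (G : SimpleGraph V) (C : Set V)

/-- chain surgery: removing a vertex with unique neighbor keeps chains -/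
lemma surgery {S : Set V} {b c : V} (hbc : G.neighborSet b ∩ S = {c}) {t t' : V}
    (ht : t ∈ S) (htb : t ≠ b) (h : ReflTransGen (Rel G S) t t') :
    (t' ≠ b → ReflTransGen (Rel G (S \ {b})) t t') ∧
    (t' = b → ReflTransGen (Rel G (S \ {b})) t c) := by
  induction h with
  | refl => exact ⟨fun _ => .refl, fun h => absurd h htb⟩
  | @tail m m' hc hstep ih =>
      have hmS : m ∈ S := by
        rcases hc.cases_head with rfl | ⟨z, hz, hz2⟩
        · exact ht
        · exact chain_mem G hz.1 hz2
      by_cases hm'b : m' = b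
      · refine ⟨fun h => absurd hm'b h, fun _ => ?_⟩
        have hmb : m ≠ b := fun h => G.irrefl (by rw [h, hm'b] at hstep; exact hstep.2)
        have hmc : m = c := by
          have : m ∈ G.neighborSet b ∩ S := ⟨hm'b ▸ hstep.2.symm, hmS⟩
          rw [hbc] at this; exact this
        exact hmc ▸ (ih.1 hmb)
      · refine ⟨fun _ => ?_, fun h => absurd h hm'b⟩
        by_cases hmb : m = b
        · have hm'c : m' = c := by
            have : m' ∈ G.neighborSet b ∩ S := ⟨hmb ▸ hstep.2, hstep.1⟩
            rw [hbc] at this; exact this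
          exact hm'c ▸ (ih.2 hmb)
        · exact (ih.1 hmb).tail ⟨⟨hstep.1, hm'b⟩, hstep.2⟩

/-- a connected graph with max degree 2 has at most 2 vertices of degree ≤ 1 -/
lemma pathb : ∀ (n : ℕ) (S : Set V), S.ncard ≤ n → (G.induce S).Connected →
    (∀ s ∈ S, (G.neighborSet s ∩ S).ncard ≤ 2) →
    {s ∈ S | (G.neighborSet s ∩ S).ncard ≤ 1}.ncard ≤ 2 := by
  intro n
  induction n with
  | zero =>
      intro S hn hconn _
      have hT : {s ∈ S | (G.neighborSet s ∩ S).ncard ≤ 1} ⊆ S := fun s hs => hs.1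
      have := Set.ncard_le_ncard hT (Set.toFinite _)
      omega
  | succ n ih =>
      intro S hn hconn hdeg
      set T := {s ∈ S | (G.neighborSet s ∩ S).ncard ≤ 1} with hTdef
      by_cases hT : T = ∅
      · rw [hT]; simp
      obtain ⟨b, hbT⟩ := Set.nonempty_iff_ne_empty.mpr hT
      have hbS : b ∈ S := hbT.1
      rcases Nat.le_one_iff_eq_zero_or_eq_one.mp hbT.2 with h0 | h1
      · -- isolated vertex : S = {b}
        have hemp : G.neighborSet b ∩ S = ∅ := by
          rw [← Set.ncard_eq_zero (Set.toFinite _)]; exact h0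
        have hSb : S ⊆ {b} := by
          intro t htS
          by_contra htb
          have htb' : b ≠ t := by
            intro h; exact htb (by simp only [Set.mem_singleton_iff]; exact h.symm)
          have hchain := induce_to_chain G S (hconn.preconnected ⟨b, hbS⟩ ⟨t, htS⟩)
          obtain ⟨z, hz⟩ := first_step htb' hchain
          exact absurd (show z ∈ G.neighborSet b ∩ S from ⟨hz.2, hz.1⟩)
            (by rw [hemp]; exact notMem_empty z)
        have := Set.ncard_le_ncard (fun s hs => hSb (hs : s ∈ T).1) (Set.toFinite ({b} : Set V))
        have hb1 : ({b} : Set V).ncard = 1 := Set.ncard_singleton b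
        omega
      · -- degree-one vertex b with unique neighbor c
        obtain ⟨c, hc⟩ := Set.ncard_eq_one.mp h1
        have hcmem : c ∈ G.neighborSet b ∩ S := hc ▸ rfl
        have hcS : c ∈ S := hcmem.2
        have hadjbc : G.Adj b c := hcmem.1
        have hcb : c ≠ b := fun h => G.irrefl (h ▸ hadjbc)
        by_cases hcd : (G.neighborSet c ∩ S).ncard ≤ 1
        · -- S = {b, c}
          have hcset : G.neighborSet c ∩ S = {b} := by
            have hbmem : b ∈ G.neighborSet c ∩ S := ⟨hadjbc.symm, hbS⟩
            have hpos : 0 < (G.neighborSet c ∩ S).ncard :=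
              (Set.ncard_pos (Set.toFinite _)).mpr ⟨b, hbmem⟩
            have h1' : (G.neighborSet c ∩ S).ncard = 1 := by omega
            obtain ⟨a, ha⟩ := Set.ncard_eq_one.mp h1'
            rw [ha] at hbmem ⊢
            rw [show a = b from hbmem.symm]
          have key : ∀ x y, ReflTransGen (Rel G S) x y → (x = b ∨ x = c) →
              (y = b ∨ y = c) := by
            intro x y hxy hx
            induction hxy with
            | refl => exact hx
            | @tail m m' hcm hstep ihm =>
                rcases ihm with rfl | rfl
                · have : m' ∈ G.neighborSet m ∩ S := ⟨hstep.2, hstep.1⟩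
                  rw [hc] at this; right; exact this
                · have : m' ∈ G.neighborSet m ∩ S := ⟨hstep.2, hstep.1⟩
                  rw [hcset] at this; left; exact this
          have hSbc : S ⊆ {b, c} := by
            intro t htS
            have hchain := induce_to_chain G S (hconn.preconnected ⟨b, hbS⟩ ⟨t, htS⟩)
            rcases key b t hchain (Or.inl rfl) with rfl | rfl
            · exact Set.mem_insert _ _
            · exact Set.mem_insert_of_mem _ rfl
          have hle := Set.ncard_le_ncard (fun s hs => hSbc (hs : s ∈ T).1)
            (Set.toFinite ({b, c} : Set V))
          have hbc2 : ({b, c} : Set V).ncard ≤ 2 :=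
            (Set.ncard_insert_le b {c}).trans (by simp)
          omega
        · -- remove b, recurse
          push_neg at hcd
          set S' := S \ {b} with hS'def
          have hcS' : c ∈ S' := ⟨hcS, hcb⟩
          have hconn' : (G.induce S').Connected := by
            have : Nonempty {x // x ∈ S'} := ⟨⟨c, hcS'⟩⟩
            refine ⟨?_⟩
            rintro ⟨x, hx⟩ ⟨y, hy⟩
            have hchain := induce_to_chain G S (hconn.preconnected ⟨x, hx.1⟩ ⟨y, hy.1⟩)
            have hch2 := (surgery G hc hx.1 hx.2 hchain).1 hy.2
            obtain ⟨hz, hr⟩ := chain_to_induce G S' hx hch2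
            exact hr
          have hsub' : ∀ s : V, G.neighborSet s ∩ S' ⊆ G.neighborSet s ∩ S :=
            fun s z hz => Set.mem_inter hz.1 hz.2.1
          have hdeg' : ∀ s ∈ S', (G.neighborSet s ∩ S').ncard ≤ 2 := fun s hs =>
            le_trans (Set.ncard_le_ncard (hsub' s) (Set.toFinite _)) (hdeg s hs.1)
          have hcard0 : S'.ncard = S.ncard - 1 := by
            rw [hS'def]; exact Set.ncard_diff_singleton_of_mem hbS
          have hSpos : 0 < S.ncard := (Set.ncard_pos (Set.toFinite _)).mpr ⟨b, hbS⟩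
          have hIH := ih S' (by omega) hconn' hdeg'
          set T' := {s ∈ S' | (G.neighborSet s ∩ S').ncard ≤ 1} with hT'def
          have hcT' : c ∈ T' := by
            refine ⟨hcS', ?_⟩
            have heq : G.neighborSet c ∩ S' = (G.neighborSet c ∩ S) \ {b} := by
              ext z; constructor
              · rintro ⟨h1, h2, h3⟩; exact ⟨⟨h1, h2⟩, h3⟩
              · rintro ⟨⟨h1, h2⟩, h3⟩; exact ⟨h1, h2, h3⟩
            rw [heq, Set.ncard_diff_singleton_of_mem (show b ∈ G.neighborSet c ∩ S from ⟨hadjbc.symm, hbS⟩)]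
            have := hdeg c hcS
            omega
          have hsub : T ⊆ insert b (T' \ {c}) := by
            intro t htT
            by_cases htb : t = b
            · exact htb ▸ Set.mem_insert _ _
            · refine Set.mem_insert_of_mem _ ?_
              have htS' : t ∈ S' := ⟨htT.1, htb⟩
              have hle : (G.neighborSet t ∩ S').ncard ≤ 1 :=
                le_trans (Set.ncard_le_ncard (hsub' t) (Set.toFinite _)) htT.2
              refine ⟨⟨htS', hle⟩, ?_⟩
              intro htc
              have h2 : (G.neighborSet t ∩ S).ncard ≤ 1 := htT.2
              rw [Set.mem_singleton_iff] at htc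
              subst htc
              omega
          have h1' : (T' \ {c}).ncard = T'.ncard - 1 :=
            Set.ncard_diff_singleton_of_mem hcT'
          have hT'pos : 0 < T'.ncard := (Set.ncard_pos (Set.toFinite _)).mpr ⟨c, hcT'⟩
          have hfin := Set.ncard_le_ncard hsub (Set.toFinite _)
          have hins := Set.ncard_insert_le b (T' \ {c})
          omega

end StmtAux
namespace StmtAux
set_option linter.unusedSectionVars false
open Relation SimpleGraph
variable {V : Type*} [Fintype V] (G : SimpleGraph V) (C : Set V)

/-- truncation of a chain at the first vertex of `S` -/
lemma trunc {A S : Set V} {a b : V} (ha : a ∈ A \ S) (h : ReflTransGen (Rel G A) a b) :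
    (b ∉ S ∧ ReflTransGen (Rel G (A \ S)) a b) ∨
    (∃ x s, x ∈ A \ S ∧ s ∈ S ∧ s ∈ A ∧ G.Adj x s ∧
      ReflTransGen (Rel G (A \ S)) a x) := by
  induction h with
  | refl => exact Or.inl ⟨ha.2, .refl⟩
  | @tail m m' hc hstep ih =>
      rcases ih with ⟨hmS, hch⟩ | found
      · have hmA : m ∈ A := by
          rcases hc.cases_head with rfl | ⟨z, hz, hz2⟩
          · exact ha.1
          · exact chain_mem G hz.1 hz2
        by_cases hm'S : m' ∈ S
        · exact Or.inr ⟨m, m', ⟨hmA, hmS⟩, hm'S, hstep.1, hstep.2, hch⟩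
        · exact Or.inl ⟨hm'S, hch.tail ⟨⟨hstep.1, hm'S⟩, hstep.2⟩⟩
      · exact Or.inr found

lemma ncard_triple {x y z : V} (hxy : x ≠ y) (hxz : x ≠ z) (hyz : y ≠ z) :
    ({x, y, z} : Set V).ncard = 3 := by
  rw [Set.ncard_insert_of_notMem (by simp [hxy, hxz]) (Set.toFinite _),
    Set.ncard_insert_of_notMem (by simp [hyz]) (Set.toFinite _), Set.ncard_singleton]

/-- removing a two-deg path keeps the component connected -/
lemma F4 (hC : TwoVC (G.induce C)) (hbr : ∃ u ∈ C, 2 < degIn G C u)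
    {P : Set V} (hP : TwoDegPath G C P) :
    ∀ a b, a ∈ C \ P → b ∈ C \ P → ReflTransGen (Rel G (C \ P)) a b := by
  obtain ⟨hPC, hPdeg, hPconn⟩ := hP
  obtain ⟨⟨p0, hp0⟩⟩ := hPconn.nonempty
  by_cases hsing : ∀ q ∈ P, q = p0
  · -- singleton path
    have hPeq : P = {p0} := Set.eq_singleton_iff_unique_mem.mpr ⟨hp0, hsing⟩
    intro a b ha hb
    rw [hPeq] at ha hb ⊢
    exact F2 G C hC (hPC hp0) ha hb
  push_neg at hsing
  obtain ⟨q1, hq1, hq1p0⟩ := hsing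
  -- internal neighbor of each vertex of P
  have intnbr : ∀ p ∈ P, ∃ z ∈ P, G.Adj p z := by
    intro p hp
    have : ∃ t ∈ P, t ≠ p := by
      by_cases h : p = p0
      · exact ⟨q1, hq1, h ▸ hq1p0⟩
      · exact ⟨p0, hp0, fun hh => h hh.symm⟩
    obtain ⟨t, ht, htp⟩ := this
    have hchain := induce_to_chain G P (hPconn.preconnected ⟨p, hp⟩ ⟨t, ht⟩)
    obtain ⟨z, hz⟩ := first_step (fun h => htp (h.symm : t = p)) hchain
    exact ⟨z, hz.1, hz.2⟩
  -- external neighbors are unique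
  have extuniq : ∀ p ∈ P, ∀ x y, x ∈ (G.neighborSet p ∩ C) \ P →
      y ∈ (G.neighborSet p ∩ C) \ P → x = y := by
    intro p hp x y hx hy
    by_contra hxy
    obtain ⟨z, hzP, hzadj⟩ := intnbr p hp
    have hsub : ({x, y, z} : Set V) ⊆ G.neighborSet p ∩ C :=
      by
        rintro w hw
        rcases hw with rfl | rfl | rfl
        · exact hx.1
        · exact hy.1
        · exact ⟨hzadj, hPC hzP⟩
    have h3 : ({x, y, z} : Set V).ncard = 3 :=
      ncard_triple hxy (fun h => hx.2 (h ▸ hzP)) (fun h => hy.2 (h ▸ hzP))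
    have hle := Set.ncard_le_ncard hsub (Set.toFinite _)
    have hdp : (G.neighborSet p ∩ C).ncard = 2 := hPdeg p hp
    omega
  -- the boundary of P
  set B := {p ∈ P | ((G.neighborSet p ∩ C) \ P).Nonempty} with hBdef
  have hB2 : B.ncard ≤ 2 := by
    have hBsub : B ⊆ {s ∈ P | (G.neighborSet s ∩ P).ncard ≤ 1} := by
      rintro p ⟨hp, x, hx⟩
      refine ⟨hp, ?_⟩
      have hsub : G.neighborSet p ∩ P ⊆ (G.neighborSet p ∩ C) \ {x} := by
        rintro z ⟨hz1, hz2⟩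
        exact ⟨⟨hz1, hPC hz2⟩, fun h => hx.2 ((Set.mem_singleton_iff.mp h) ▸ hz2)⟩
      have := Set.ncard_le_ncard hsub (Set.toFinite _)
      rw [Set.ncard_diff_singleton_of_mem hx.1] at this
      have hdp : (G.neighborSet p ∩ C).ncard = 2 := hPdeg p hp
      omega
    have hpb := pathb G P.ncard P le_rfl hPconn (fun s hs => by
      have hsub : G.neighborSet s ∩ P ⊆ G.neighborSet s ∩ C :=
        fun z hz => ⟨hz.1, hPC hz.2⟩
      have := Set.ncard_le_ncard hsub (Set.toFinite _)
      have hdp : (G.neighborSet s ∩ C).ncard = 2 := hPdeg s hs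
      omega)
    exact (Set.ncard_le_ncard hBsub (Set.toFinite _)).trans hpb
  -- every vertex outside reaches an external neighbor of the boundary
  have claim1 : ∀ t ∈ C \ P, ∃ s ∈ B, ∃ x, x ∈ (G.neighborSet s ∩ C) \ P ∧
      ReflTransGen (Rel G (C \ P)) t x := by
    intro t ht
    have hchain := F1 G C hC ht.1 (hPC hp0)
    rcases trunc G ht hchain with ⟨hcon, _⟩ | ⟨x, s, hx, hsP, hsC, hadj, hch⟩
    · exact absurd hp0 hcon
    · exact ⟨s, ⟨hsP, ⟨x, ⟨hadj.symm, hx.1⟩, hx.2⟩⟩, x, ⟨⟨hadj.symm, hx.1⟩, hx.2⟩, hch⟩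
  -- external neighbors of the boundary are mutually connected
  have claim2 : ∀ s ∈ B, ∀ s' ∈ B, ∀ x x', x ∈ (G.neighborSet s ∩ C) \ P →
      x' ∈ (G.neighborSet s' ∩ C) \ P → ReflTransGen (Rel G (C \ P)) x x' := by
    intro s hs s' hs' x x' hx hx'
    by_cases hss' : s = s'
    · rw [extuniq s hs.1 x x' hx (hss' ▸ hx')]
    · have hsP : s ∈ P := hs.1
      have hs'P : s' ∈ P := hs'.1
      have hxs : x ≠ s := fun h => hx.2 (h ▸ hsP)
      have hx's : x' ≠ s := fun h => hx'.2 (h ▸ hsP)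
      have hchain := F2 G C hC (hPC hsP) (a := x) (b := x')
        ⟨hx.1.2, hxs⟩ ⟨hx'.1.2, hx's⟩
      have hxmem : x ∈ (C \ {s}) \ P := ⟨⟨hx.1.2, hxs⟩, hx.2⟩
      have hmono : ∀ p q : V, Rel G ((C \ {s}) \ P) p q → Rel G (C \ P) p q :=
        fun p q hpq => ⟨⟨hpq.1.1.1, hpq.1.2⟩, hpq.2⟩
      rcases trunc G hxmem hchain with ⟨_, hch⟩ | ⟨z, s'', hz, hs''P, hs''A, hadj, hch⟩
      · exact ReflTransGen.mono hmono _ _ hch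
      · have hs''B : s'' ∈ B := ⟨hs''P, ⟨z, ⟨hadj.symm, hz.1.1⟩, hz.2⟩⟩
        have hs''s : s'' ≠ s := hs''A.2
        have hs''s' : s'' = s' := by
          by_contra hne
          have hsB : s ∈ B := hs
          have hsub : ({s, s', s''} : Set V) ⊆ B := by
            rintro w hw
            rcases hw with rfl | rfl | rfl
            · exact hs
            · exact hs'
            · exact hs''B
          have h3 := ncard_triple (V := V) hss' (fun h => hs''s h.symm)
            (fun h => hne h.symm)
          have := Set.ncard_le_ncard hsub (Set.toFinite _)
          omega
        have hzx' : z = x' := extuniq s' hs'P z x'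
          ⟨⟨(hs''s' ▸ hadj : G.Adj z s').symm, hz.1.1⟩, hz.2⟩ (hx')
        exact hzx' ▸ (ReflTransGen.mono hmono _ _ hch)
  intro a b ha hb
  obtain ⟨s, hsB, x, hx, hcha⟩ := claim1 a ha
  obtain ⟨s', hs'B, x', hx', hchb⟩ := claim1 b hb
  have hmid := claim2 s hsB s' hs'B x x' hx hx'
  exact (hcha.trans hmid).trans (chain_rev G hb hchb)

/-- chains avoiding a given edge, via 2-vertex-connectivity -/
lemma F3 (hC : TwoVC (G.induce C)) {u v : V} (hu : u ∈ C) (hadj : G.Adj u v)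
    (hdu : 2 < degIn G C u) {a b : V} (ha : a ∈ C) (hb : b ∈ C) :
    ReflTransGen (fun p q => q ∈ C ∧ G.Adj p q ∧ s(p, q) ≠ s(u, v)) a b := by
  set R' := fun p q => q ∈ C ∧ G.Adj p q ∧ s(p, q) ≠ s(u, v) with hR'
  have lift' : ∀ x y : V, x ∈ C \ {u} → ReflTransGen (Rel G (C \ {u})) x y →
      ReflTransGen R' x y := by
    intro x y hxm hch
    induction hch with
    | refl => exact .refl
    | @tail m m' hc hstep ih =>
        have hmA : m ∈ C \ {u} := chain_mem G hxm hc
        refine ih.tail ⟨hstep.1.1, hstep.2, ?_⟩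
        intro hedge
        have : u ∈ s(m, m') := hedge ▸ Sym2.mem_mk_left u v
        rcases Sym2.mem_iff.mp this with rfl | rfl
        · exact hmA.2 rfl
        · exact hstep.1.2 rfl
  -- a neighbor of u other than v
  have hw : ∃ w, w ∈ G.neighborSet u ∩ C ∧ w ≠ v := by
    by_contra h
    push_neg at h
    have hsub : G.neighborSet u ∩ C ⊆ {v} := fun z hz => h z hz
    have := Set.ncard_le_ncard hsub (Set.toFinite _)
    have h1 : ({v} : Set V).ncard = 1 := Set.ncard_singleton v
    have : degIn G C u ≤ 1 := by
      show (G.neighborSet u ∩ C).ncard ≤ 1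
      omega
    omega
  obtain ⟨w, hwmem, hwv⟩ := hw
  have hwu : w ≠ u := fun h => G.irrefl (h ▸ hwmem.1)
  have hedge_uw : ∀ z, z ≠ v → s(u, z) ≠ s(u, v) := by
    intro z hz hedge
    have : v ∈ s(u, z) := hedge ▸ Sym2.mem_mk_right u v
    rcases Sym2.mem_iff.mp this with rfl | rfl
    · exact G.irrefl hadj
    · exact hz rfl
  by_cases hau : a = u <;> by_cases hbu : b = u
  · rw [hau, hbu]
  · -- a = u, b ≠ u
    subst hau
    refine ReflTransGen.head ⟨hwmem.2, hwmem.1, hedge_uw w hwv⟩ ?_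
    exact lift' w b ⟨hwmem.2, hwu⟩ (F2 G C hC hu ⟨hwmem.2, hwu⟩ ⟨hb, hbu⟩)
  · -- b = u, a ≠ u
    have hch := lift' a w ⟨ha, hau⟩ (F2 G C hC hu ⟨ha, hau⟩ ⟨hwmem.2, hwu⟩)
    have hres : ReflTransGen R' a u := by
      refine hch.tail ⟨hu, hwmem.1.symm, ?_⟩
      intro hedge
      have : v ∈ s(w, u) := hedge ▸ Sym2.mem_mk_right u v
      rcases Sym2.mem_iff.mp this with rfl | rfl
      · exact hwv rfl
      · exact G.irrefl hadj
    exact hbu ▸ hres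
  · exact lift' a b ⟨ha, hau⟩ (F2 G C hC hu ⟨ha, hau⟩ ⟨hb, hbu⟩)

end StmtAux
namespace StmtAux
set_option linter.unusedSectionVars false
open Relation SimpleGraph
variable {V : Type*} [Fintype V] (G : SimpleGraph V) (C : Set V)

lemma sym2_rep {e : Sym2 V} (he : e ∈ G.edgeSet) : ∃ a b, G.Adj a b ∧ e = s(a, b) := by
  revert he
  refine Sym2.ind (fun a b he => ⟨a, b, he, rfl⟩) e

lemma adj_branch_path (hu : {v : V // v ∈ C ∧ 2 < degIn G C v})
    (P : {P : Set V // MaxTwoDegPath G C P}) {w : V} (hw : w ∈ P.1)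
    (hadj : G.Adj hu.1 w) :
    (HC G C).Adj (Sum.inl hu) (Sum.inr (Sum.inl P)) := by
  rw [HC, SimpleGraph.fromRel_adj]
  exact ⟨by simp, Or.inl ⟨w, hw, hadj⟩⟩

lemma adj_branch_evert (hu : {v : V // v ∈ C ∧ 2 < degIn G C v})
    (e : {e : Sym2 V // e ∈ G.edgeSet ∧ ∀ v ∈ e, v ∈ C ∧ 2 < degIn G C v})
    (hmem : hu.1 ∈ e.1) :
    (HC G C).Adj (Sum.inl hu) (Sum.inr (Sum.inr e)) := by
  rw [HC, SimpleGraph.fromRel_adj]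
  exact ⟨by simp, Or.inl hmem⟩

lemma phi_step (hC : TwoVC (G.induce C)) {x : HVert G C} {p q : V}
    (hp : p ∈ C) (hq : q ∈ C) (hadj : G.Adj p q)
    (hqx : phi G C hC q hq ≠ x)
    (hex : ∀ (h : 2 < degIn G C p) (h' : 2 < degIn G C q),
      eVert G C hp hq h h' hadj ≠ x) :
    ReflTransGen (fun y z => z ≠ x ∧ (HC G C).Adj y z)
      (phi G C hC p hp) (phi G C hC q hq) := by
  by_cases hdp : 2 < degIn G C p <;> by_cases hdq : 2 < degIn G C q
  · -- both branch: via edge vertex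
    refine ReflTransGen.head (b := eVert G C hp hq hdp hdq hadj) ⟨hex hdp hdq, ?_⟩ ?_
    · rw [phi_branch G C hC hp hdp]
      exact adj_branch_evert G C _ _ (Sym2.mem_mk_left p q)
    · refine ReflTransGen.single ⟨hqx, ?_⟩
      rw [phi_branch G C hC hq hdq]
      exact ((adj_branch_evert G C ⟨q, hq, hdq⟩ _ (Sym2.mem_mk_right p q)).symm)
  · -- p branch, q two
    obtain ⟨hm, hphiq⟩ := phi_two G C hC hq hdq
    refine ReflTransGen.single ⟨hqx, ?_⟩
    rw [phi_branch G C hC hp hdp, hphiq]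
    exact adj_branch_path G C _ _ (mem_pset_self G C
      (mem_dset_of_not_branch G C hC hq hdq)) hadj
  · -- p two, q branch
    obtain ⟨hm, hphip⟩ := phi_two G C hC hp hdp
    refine ReflTransGen.single ⟨hqx, ?_⟩
    rw [phi_branch G C hC hq hdq, hphip]
    exact (adj_branch_path G C ⟨q, hq, hdq⟩ ⟨Pset G C p, hm⟩ (mem_pset_self G C
      (mem_dset_of_not_branch G C hC hp hdp)) hadj.symm).symm
  · -- both two: equal
    obtain ⟨hm, hphip⟩ := phi_two G C hC hp hdp
    obtain ⟨hm', hphiq⟩ := phi_two G C hC hq hdq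
    have hPeq : Pset G C p = Pset G C q := pset_adj_eq G C
      (mem_dset_of_not_branch G C hC hp hdp) (mem_dset_of_not_branch G C hC hq hdq) hadj
    have : phi G C hC p hp = phi G C hC q hq := by
      rw [hphip, hphiq]
      exact congrArg (fun S => Sum.inr (Sum.inl S)) (Subtype.ext hPeq)
    rw [this]

lemma chain_phi (hC : TwoVC (G.induce C)) {x : HVert G C} (A : Set V) (hA : A ⊆ C)
    (R : V → V → Prop) (hR : ∀ p q, R p q → q ∈ A ∧ G.Adj p q)
    (hphiK : ∀ v (hv : v ∈ A), phi G C hC v (hA hv) ≠ x)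
    (heK : ∀ p q (hp : p ∈ A) (hq : q ∈ A) (hr : R p q)
      (h : 2 < degIn G C p) (h' : 2 < degIn G C q),
      eVert G C (hA hp) (hA hq) h h' (hR p q hr).2 ≠ x) :
    ∀ a b (ha : a ∈ A), ReflTransGen R a b → ∃ hb : b ∈ A,
      ReflTransGen (fun y z => z ≠ x ∧ (HC G C).Adj y z)
        (phi G C hC a (hA ha)) (phi G C hC b (hA hb)) := by
  intro a b ha h
  induction h with
  | refl => exact ⟨ha, .refl⟩
  | @tail m m' hc hstep ih =>
      obtain ⟨hm, hch⟩ := ih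
      have hm' : m' ∈ A := (hR m m' hstep).1
      refine ⟨hm', hch.trans ?_⟩
      exact phi_step G C hC (hA hm) (hA hm') (hR m m' hstep).2
        (hphiK m' hm') (heK m m' hm hm' hstep)

lemma glue (hC : TwoVC (G.induce C)) (x : HVert G C) (A : Set V) (hA : A ⊆ C)
    (R : V → V → Prop) (hR : ∀ p q, R p q → q ∈ A ∧ G.Adj p q)
    (hphiK : ∀ v (hv : v ∈ A), phi G C hC v (hA hv) ≠ x)
    (heK : ∀ p q (hp : p ∈ A) (hq : q ∈ A) (hr : R p q)
      (h : 2 < degIn G C p) (h' : 2 < degIn G C q),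
      eVert G C (hA hp) (hA hq) h h' (hR p q hr).2 ≠ x)
    (hchain : ∀ a b, a ∈ A → b ∈ A → ReflTransGen R a b)
    (hrep : ∀ y : HVert G C, y ≠ x → ∃ r, ∃ hr : r ∈ A,
      y = phi G C hC r (hA hr) ∨ (HC G C).Adj y (phi G C hC r (hA hr))) :
    ((HC G C).induce ({x}ᶜ : Set (HVert G C))).Preconnected := by
  rintro ⟨y, hy⟩ ⟨z, hz⟩
  have hy' : y ≠ x := hy
  have hz' : z ≠ x := hz
  obtain ⟨ry, hry, hyr⟩ := hrep y hy'
  obtain ⟨rz, hrz, hzr⟩ := hrep z hz'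
  obtain ⟨hb, hch⟩ := chain_phi G C hC A hA R hR hphiK heK ry rz hry
    (hchain ry rz hry hrz)
  -- reachability between the phi images
  have hchK : ReflTransGen (fun y z : HVert G C =>
      z ∈ ({x}ᶜ : Set (HVert G C)) ∧ (HC G C).Adj y z)
      (phi G C hC ry (hA hry)) (phi G C hC rz (hA hb)) :=
    ReflTransGen.mono (fun p q hpq => ⟨hpq.1, hpq.2⟩) _ _ hch
  obtain ⟨hmz, hmid⟩ := chain_to_induce (HC G C) ({x}ᶜ : Set (HVert G C))
    (hphiK ry hry) hchK
  -- connect endpoints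
  have hylink : ((HC G C).induce ({x}ᶜ : Set (HVert G C))).Reachable
      ⟨y, hy⟩ ⟨phi G C hC ry (hA hry), hphiK ry hry⟩ := by
    rcases hyr with heq | hadj
    · have h' : (⟨y, hy⟩ : {a // a ∈ ({x}ᶜ : Set (HVert G C))}) =
        ⟨phi G C hC ry (hA hry), hphiK ry hry⟩ := Subtype.ext heq
      rw [h']
    · exact SimpleGraph.Adj.reachable hadj
  have hzlink : ((HC G C).induce ({x}ᶜ : Set (HVert G C))).Reachable
      ⟨z, hz⟩ ⟨phi G C hC rz (hA hb), hmz⟩ := by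
    rcases hzr with heq | hadj
    · have h' : (⟨z, hz⟩ : {a // a ∈ ({x}ᶜ : Set (HVert G C))}) =
        ⟨phi G C hC rz (hA hb), hmz⟩ := Subtype.ext heq
      rw [h']
    · exact SimpleGraph.Adj.reachable hadj
  exact (hylink.trans hmid).trans hzlink.symm

end StmtAux
namespace StmtAux
set_option linter.unusedSectionVars false
open Relation SimpleGraph
variable {V : Type*} [Fintype V] (G : SimpleGraph V) (C : Set V)

lemma induce_deg_transfer (v : {x // x ∈ C}) :
    ((G.induce C).neighborSet v).ncard = degIn G C v.1 := by
  have himg : Subtype.val '' ((G.induce C).neighborSet v) = G.neighborSet v.1 ∩ C := by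
    ext z
    constructor
    · rintro ⟨w, hw, rfl⟩; exact ⟨hw, w.2⟩
    · rintro ⟨h1, h2⟩; exact ⟨⟨z, h2⟩, h1, rfl⟩
  rw [show degIn G C v.1 = (G.neighborSet v.1 ∩ C).ncard from rfl, ← himg,
    Set.ncard_image_of_injective _ Subtype.val_injective]

lemma induce_connected (hC : TwoVC (G.induce C)) : (G.induce C).Connected := by
  obtain ⟨a, _, _, ha, _, _, _, _, _⟩ := three_distinct G C hC
  have : Nonempty {x // x ∈ C} := ⟨⟨a, ha⟩⟩
  refine SimpleGraph.Connected.mk ?_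
  intro p q
  obtain ⟨hq', hr⟩ := chain_to_induce G C p.2 (F1 G C hC p.2 q.2)
  exact hr

lemma branch_exists (hC : TwoVC (G.induce C)) (hnc : ¬ IsCycleGraph (G.induce C)) :
    ∃ u, u ∈ C ∧ 2 < degIn G C u := by
  by_contra h
  push_neg at h
  refine hnc ⟨induce_connected G C hC, ?_⟩
  intro v
  rw [induce_deg_transfer G C v]
  exact le_antisymm (h v.1 v.2) (min_deg G C hC v.2)

lemma not_three_same_pset (hC : TwoVC (G.induce C)) {u : V} (hu : u ∈ C)
    (hdu : 2 < degIn G C u) {w1 w2 w3 : V}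
    (h1 : w1 ∈ G.neighborSet u ∩ C) (h2 : w2 ∈ G.neighborSet u ∩ C)
    (h3 : w3 ∈ G.neighborSet u ∩ C)
    (hD1 : w1 ∈ Dset G C) (hD2 : w2 ∈ Dset G C) (hD3 : w3 ∈ Dset G C)
    (hP2 : Pset G C w2 = Pset G C w1) (hP3 : Pset G C w3 = Pset G C w1)
    (h12 : w1 ≠ w2) (h13 : w1 ≠ w3) (h23 : w2 ≠ w3) : False := by
  set P := Pset G C w1 with hPdef
  have hPpath := pset_two_deg_path G C hD1
  have huP : u ∉ P := by
    intro huP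
    have := (pset_subset_dset G C huP).2
    omega
  have hmem : ∀ w, w ∈ G.neighborSet u ∩ C → w ∈ P →
      w ∈ {s ∈ P | (G.neighborSet s ∩ P).ncard ≤ 1} := by
    intro w hw hwP
    refine ⟨hwP, ?_⟩
    have husub : G.neighborSet w ∩ P ⊆ (G.neighborSet w ∩ C) \ {u} := by
      rintro z ⟨hz1, hz2⟩
      exact ⟨⟨hz1, hPpath.1 hz2⟩, fun hzu => huP ((Set.mem_singleton_iff.mp hzu) ▸ hz2)⟩
    have hle := Set.ncard_le_ncard husub (Set.toFinite _)
    rw [Set.ncard_diff_singleton_of_mem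
      (show u ∈ G.neighborSet w ∩ C from ⟨hw.1.symm, hu⟩)] at hle
    have hdw : (G.neighborSet w ∩ C).ncard = 2 := hPpath.2.1 w hwP
    omega
  have hpb := pathb G P.ncard P le_rfl hPpath.2.2 (fun s hs => by
    have hsub : G.neighborSet s ∩ P ⊆ G.neighborSet s ∩ C :=
      fun z hz => ⟨hz.1, hPpath.1 hz.2⟩
    have := Set.ncard_le_ncard hsub (Set.toFinite _)
    have hds : (G.neighborSet s ∩ C).ncard = 2 := hPpath.2.1 s hs
    omega)
  have hw1P : w1 ∈ P := mem_pset_self G C hD1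
  have hw2P : w2 ∈ P := hP2 ▸ mem_pset_self G C hD2
  have hw3P : w3 ∈ P := hP3 ▸ mem_pset_self G C hD3
  have hsub : ({w1, w2, w3} : Set V) ⊆ {s ∈ P | (G.neighborSet s ∩ P).ncard ≤ 1} := by
    rintro w hw
    rcases hw with rfl | rfl | rfl
    · exact hmem w h1 hw1P
    · exact hmem w h2 hw2P
    · exact hmem w h3 hw3P
  have htriple := ncard_triple (V := V) h12 h13 h23
  have := Set.ncard_le_ncard hsub (Set.toFinite _)
  omega

lemma three_hvert (hC : TwoVC (G.induce C)) (hbr : ∃ u, u ∈ C ∧ 2 < degIn G C u) :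
    ∃ a b c : HVert G C, a ≠ b ∧ a ≠ c ∧ b ≠ c := by
  obtain ⟨u, hu, hdu⟩ := hbr
  have hcard : 2 < (G.neighborSet u ∩ C).ncard := hdu
  by_cases hA : ∃ w ∈ G.neighborSet u ∩ C, 2 < degIn G C w
  · obtain ⟨w, hw, hdw⟩ := hA
    refine ⟨Sum.inl ⟨u, hu, hdu⟩, Sum.inl ⟨w, hw.2, hdw⟩,
      eVert G C hu hw.2 hdu hdw hw.1, ?_, by simp [eVert], by simp [eVert]⟩
    simp only [ne_eq, Sum.inl.injEq]
    intro h
    have huw : u = w := congrArg Subtype.val h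
    exact G.irrefl (huw ▸ hw.1)
  · push_neg at hA
    have hDall : ∀ w ∈ G.neighborSet u ∩ C, w ∈ Dset G C := by
      intro w hw
      exact ⟨hw.2, le_antisymm (hA w hw) (min_deg G C hC hw.2)⟩
    by_cases hB : ∃ w ∈ G.neighborSet u ∩ C, ∃ w' ∈ G.neighborSet u ∩ C,
        Pset G C w ≠ Pset G C w'
    · obtain ⟨w, hw, w', hw', hne⟩ := hB
      refine ⟨Sum.inl ⟨u, hu, hdu⟩,
        Sum.inr (Sum.inl ⟨Pset G C w, pset_max G C (hDall w hw)⟩),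
        Sum.inr (Sum.inl ⟨Pset G C w', pset_max G C (hDall w' hw')⟩),
        by simp, by simp, ?_⟩
      simp only [ne_eq, Sum.inr.injEq, Sum.inl.injEq]
      intro h
      exact hne (congrArg Subtype.val h)
    · push_neg at hB
      obtain ⟨w1, hw1, w2, hw2, w3, hw3, h12, h13, h23⟩ :=
        (Set.two_lt_ncard (Set.toFinite _)).mp hcard
      exact absurd (not_three_same_pset G C hC hu hdu hw1 hw2 hw3
        (hDall w1 hw1) (hDall w2 hw2) (hDall w3 hw3)
        (hB w2 hw2 w1 hw1) (hB w3 hw3 w1 hw1) h12 h13 h23) (fun h => h)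

lemma rep_path (hC : TwoVC (G.induce C)) (Q : {P : Set V // MaxTwoDegPath G C P}) :
    ∃ q, ∃ hqC : q ∈ C, q ∈ Q.1 ∧ degIn G C q = 2 ∧
      Sum.inr (Sum.inl Q) = phi G C hC q hqC := by
  obtain ⟨⟨q, hq⟩⟩ := Q.2.1.2.2.nonempty
  have hqC : q ∈ C := Q.2.1.1 hq
  have hdq : degIn G C q = 2 := Q.2.1.2.1 q hq
  have hnb : ¬ 2 < degIn G C q := by omega
  obtain ⟨hm, hphiq⟩ := phi_two G C hC hqC hnb
  refine ⟨q, hqC, hq, hdq, ?_⟩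
  rw [hphiq]
  have : (⟨Pset G C q, hm⟩ : {P : Set V // MaxTwoDegPath G C P}) = Q :=
    Subtype.ext (max_eq_pset G C Q.2 hq).symm
  rw [this]

lemma rep_edge_adj (hC : TwoVC (G.induce C))
    (e : {e : Sym2 V // e ∈ G.edgeSet ∧ ∀ v ∈ e, v ∈ C ∧ 2 < degIn G C v})
    {w : V} (hw : w ∈ e.1) :
    (HC G C).Adj (Sum.inr (Sum.inr e)) (phi G C hC w (e.2.2 w hw).1) := by
  rw [phi_branch G C hC (e.2.2 w hw).1 (e.2.2 w hw).2]
  exact (adj_branch_evert G C ⟨w, (e.2.2 w hw).1, (e.2.2 w hw).2⟩ e hw).symm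

end StmtAux
theorem stmt16 {V : Type*} [Fintype V] (G : SimpleGraph V) (C : Set V)
    (hC : TwoVC (G.induce C)) (hnc : ¬ IsCycleGraph (G.induce C)) :
    TwoVC (HC G C) := by
  classical
  open StmtAux in
  obtain ⟨u0, hu0, hdu0⟩ := branch_exists G C hC hnc
  obtain ⟨a, b, c, hab, hac, hbc⟩ := three_hvert G C hC ⟨u0, hu0, hdu0⟩
  constructor
  · have : Fintype (HVert G C) := Fintype.ofFinite _
    rw [Nat.card_eq_fintype_card]
    exact Fintype.two_lt_card_iff.mpr ⟨a, b, c, hab, hac, hbc⟩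
  intro x
  have hne : ∃ y : HVert G C, y ≠ x := by
    by_cases h : a = x
    · exact ⟨b, fun hbx => hab (h.trans hbx.symm)⟩
    · exact ⟨a, h⟩
  obtain ⟨y0, hy0⟩ := hne
  have hnemp : Nonempty {y // y ∈ ({x}ᶜ : Set (HVert G C))} := ⟨⟨y0, hy0⟩⟩
  refine SimpleGraph.Connected.mk ?_
  obtain ub | Q0 | e0 := x
  · -- removing an ordinary (branch) vertex
    refine glue G C hC (Sum.inl ub) (C \ {ub.1}) Set.diff_subset
      (Rel G (C \ {ub.1})) (fun p q h => ⟨h.1, h.2⟩) ?_ ?_ ?_ ?_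
    · -- hphiK
      intro v hv
      by_cases hd : 2 < degIn G C v
      · rw [phi_branch G C hC _ hd]
        intro h
        exact hv.2 (Set.mem_singleton_iff.mpr
          (congrArg Subtype.val (Sum.inl_injective h)))
      · obtain ⟨hm, hphiv⟩ := phi_two G C hC _ hd
        rw [hphiv]; simp
    · -- heK
      intro p q hp hq hr h h'
      simp [eVert]
    · -- hchain
      exact fun a' b' ha' hb' => F2 G C hC ub.2.1 ha' hb'
    · -- hrep
      intro y hyx
      obtain w | Q | e := y
      · refine ⟨w.1, ⟨w.2.1, fun h => hyx
          (congrArg Sum.inl (Subtype.ext (Set.mem_singleton_iff.mp h)))⟩, Or.inl ?_⟩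
        rw [phi_branch G C hC _ w.2.2]
      · obtain ⟨q, hqC, hqQ, hdq, heq⟩ := rep_path G C hC Q
        refine ⟨q, ⟨hqC, fun h => ?_⟩, Or.inl heq⟩
        have := ub.2.2
        rw [Set.mem_singleton_iff.mp h] at hdq
        omega
      · obtain ⟨a1, b1, hadj1, hrep1⟩ := sym2_rep G e.2.1
        have ha1 : a1 ∈ e.1 := hrep1 ▸ Sym2.mem_mk_left a1 b1
        have hb1 : b1 ∈ e.1 := hrep1 ▸ Sym2.mem_mk_right a1 b1
        by_cases hau : a1 = ub.1
        · refine ⟨b1, ⟨(e.2.2 b1 hb1).1, fun h => ?_⟩,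
            Or.inr (rep_edge_adj G C hC e hb1)⟩
          exact G.irrefl ((hau.trans (Set.mem_singleton_iff.mp h).symm) ▸ hadj1)
        · exact ⟨a1, ⟨(e.2.2 a1 ha1).1, fun h => hau (Set.mem_singleton_iff.mp h)⟩,
            Or.inr (rep_edge_adj G C hC e ha1)⟩
  · -- removing a path vertex
    refine glue G C hC (Sum.inr (Sum.inl Q0)) (C \ Q0.1) Set.diff_subset
      (Rel G (C \ Q0.1)) (fun p q h => ⟨h.1, h.2⟩) ?_ ?_ ?_ ?_
    · -- hphiK
      intro v hv
      by_cases hd : 2 < degIn G C v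
      · rw [phi_branch G C hC _ hd]; simp
      · obtain ⟨hm, hphiv⟩ := phi_two G C hC _ hd
        rw [hphiv]
        intro h
        have h1 : Pset G C v = Q0.1 := congrArg Subtype.val
          (Sum.inl_injective (Sum.inr_injective h))
        exact hv.2 (h1 ▸ mem_pset_self G C (mem_dset_of_not_branch G C hC hv.1 hd))
    · -- heK
      intro p q hp hq hr h h'
      simp [eVert]
    · -- hchain
      exact fun a' b' ha' hb' => F4 G C hC ⟨u0, hu0, hdu0⟩ Q0.2.1 a' b' ha' hb'
    · -- hrep
      intro y hyx
      obtain w | Q | e := y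
      · exact ⟨w.1, ⟨w.2.1, fun h => absurd (Q0.2.1.2.1 w.1 h)
          (by have := w.2.2; omega)⟩, Or.inl (by rw [phi_branch G C hC _ w.2.2])⟩
      · obtain ⟨q, hqC, hqQ, hdq, heq⟩ := rep_path G C hC Q
        refine ⟨q, ⟨hqC, fun h => ?_⟩, Or.inl heq⟩
        have h1 : Q0.1 = Pset G C q := max_eq_pset G C Q0.2 h
        have h2 : Q.1 = Pset G C q := max_eq_pset G C Q.2 hqQ
        exact hyx (congrArg (fun S => Sum.inr (Sum.inl S))
          (Subtype.ext (h2.trans h1.symm)))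
      · obtain ⟨a1, b1, hadj1, hrep1⟩ := sym2_rep G e.2.1
        have ha1 : a1 ∈ e.1 := hrep1 ▸ Sym2.mem_mk_left a1 b1
        exact ⟨a1, ⟨(e.2.2 a1 ha1).1, fun h => absurd (Q0.2.1.2.1 a1 h)
          (by have := (e.2.2 a1 ha1).2; omega)⟩,
          Or.inr (rep_edge_adj G C hC e ha1)⟩
  · -- removing an auxiliary edge vertex
    obtain ⟨ue, ve, hadje, hrepe⟩ := sym2_rep G e0.2.1
    have huem : ue ∈ e0.1 := hrepe ▸ Sym2.mem_mk_left ue ve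
    refine glue G C hC (Sum.inr (Sum.inr e0)) C (fun _ h => h)
      (fun p q => q ∈ C ∧ G.Adj p q ∧ s(p, q) ≠ e0.1)
      (fun p q h => ⟨h.1, h.2.1⟩) ?_ ?_ ?_ ?_
    · -- hphiK
      intro v hv
      by_cases hd : 2 < degIn G C v
      · rw [phi_branch G C hC _ hd]; simp
      · obtain ⟨hm, hphiv⟩ := phi_two G C hC _ hd
        rw [hphiv]; simp
    · -- heK
      intro p q hp hq hr h h'
      intro heq
      apply hr.2.2
      have h1 := Sum.inr_injective (Sum.inr_injective heq)
      exact congrArg Subtype.val h1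
    · -- hchain
      intro a' b' ha' hb'
      have := F3 G C hC (e0.2.2 ue huem).1 hadje (e0.2.2 ue huem).2 ha' hb'
      exact Relation.ReflTransGen.mono (fun p q h => ⟨h.1, h.2.1, by rw [hrepe]; exact h.2.2⟩) _ _ this
    · -- hrep
      intro y hyx
      obtain w | Q | e := y
      · exact ⟨w.1, w.2.1, Or.inl (by rw [phi_branch G C hC _ w.2.2])⟩
      · obtain ⟨q, hqC, hqQ, hdq, heq⟩ := rep_path G C hC Q
        exact ⟨q, hqC, Or.inl heq⟩
      · obtain ⟨a1, b1, hadj1, hrep1⟩ := sym2_rep G e.2.1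
        have ha1 : a1 ∈ e.1 := hrep1 ▸ Sym2.mem_mk_left a1 b1
        exact ⟨a1, (e.2.2 a1 ha1).1, Or.inr (rep_edge_adj G C hC e ha1)⟩
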